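/- Let R : ℝ² → ℝ be twice continuously differentiable and satisfy ΔR(ξ) − R(ξ) + R(ξ)³ = 0 for all ξ ∈ ℝ², and fix t_c > 0. Define, for t < t_c and x ∈ ℝ², ψ(t,x) := (t_c − t)^{−1} · R( x/(t_c − t) ) · exp( i( t/(t_c(t_c − t)) − |x|²/(4(t_c − t)) ) ). Then ψ is a classical solution of the two-dimensional cubic NLS: i∂_t ψ + Δψ + |ψ|²ψ = 0 for all t < t_c and x ∈ ℝ². -/

import Mathlib

open scoped BigOperators

/-- Partial derivative in the time variable. -/
noncomputable def tDeriv (ψ : ℝ → (Fin 2 → ℝ) → ℂ) (t : ℝ) (x : Fin 2 → ℝ) : ℂ :=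
  deriv (fun s => ψ s x) t

/-- Spatial Laplacian of a complex-valued function on ℝ², computed coordinatewise. -/
noncomputable def lapC (ψ : ℝ → (Fin 2 → ℝ) → ℂ) (t : ℝ) (x : Fin 2 → ℝ) : ℂ :=
  ∑ j : Fin 2, iteratedDeriv 2 (fun s => ψ t (Function.update x j s)) (x j)

/-- Laplacian of a real-valued function on ℝ², computed coordinatewise. -/
noncomputable def lapR (R : (Fin 2 → ℝ) → ℝ) (ξ : Fin 2 → ℝ) : ℝ :=
  ∑ j : Fin 2, iteratedDeriv 2 (fun s => R (Function.update ξ j s)) (ξ j)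

/-- The explicit blowup solution
`ψ(t,x) = (t_c−t)⁻¹ R(x/(t_c−t)) exp(i(t/(t_c(t_c−t)) − |x|²/(4(t_c−t))))`. -/
noncomputable def blowupSol (tc : ℝ) (R : (Fin 2 → ℝ) → ℝ) (t : ℝ) (x : Fin 2 → ℝ) : ℂ :=
  (((tc - t)⁻¹ * R ((tc - t)⁻¹ • x) : ℝ) : ℂ) *
    Complex.exp (Complex.I *
      ((t / (tc * (tc - t)) - (∑ j : Fin 2, (x j) ^ 2) / (4 * (tc - t)) : ℝ) : ℂ))

noncomputable def pD (f : (Fin 2 → ℝ) → ℝ) (j : Fin 2) (y : Fin 2 → ℝ) : ℝ :=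
  fderiv ℝ f y (Pi.single j 1)

noncomputable def qD (R : (Fin 2 → ℝ) → ℝ) (j : Fin 2) (y : Fin 2 → ℝ) : ℝ :=
  fderiv ℝ (pD R j) y (Pi.single j 1)

lemma pD_contDiff {R : (Fin 2 → ℝ) → ℝ} (hR : ContDiff ℝ 2 R) (j : Fin 2) :
    ContDiff ℝ 1 (pD R j) :=
  (hR.fderiv_right (m := 1) (by norm_num)).clm_apply contDiff_const

lemma slice_hasDerivAt {f : (Fin 2 → ℝ) → ℝ} (hf : Differentiable ℝ f) (ξ : Fin 2 → ℝ)
    (j : Fin 2) (r : ℝ) :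
    HasDerivAt (fun s => f (Function.update ξ j s)) (pD f j (Function.update ξ j r)) r :=
  (hf _).hasFDerivAt.comp_hasDerivAt r (hasDerivAt_update ξ j r)

lemma fderiv_apply_two (f : (Fin 2 → ℝ) → ℝ) (ξ w : Fin 2 → ℝ) :
    fderiv ℝ f ξ w = w 0 * pD f 0 ξ + w 1 * pD f 1 ξ := by
  have hw : w = w 0 • (Pi.single 0 1 : Fin 2 → ℝ) + w 1 • (Pi.single 1 1 : Fin 2 → ℝ) := by
    funext k; fin_cases k <;> simp
  rw [hw]
  simp [pD, smul_eq_mul]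

lemma slice2 {R : (Fin 2 → ℝ) → ℝ} (hR : ContDiff ℝ 2 R) (ξ : Fin 2 → ℝ) (j : Fin 2) :
    iteratedDeriv 2 (fun s => R (Function.update ξ j s)) (ξ j) = qD R j ξ := by
  rw [iteratedDeriv_succ, iteratedDeriv_one]
  have h1 : deriv (fun s => R (Function.update ξ j s)) =
      fun r => pD R j (Function.update ξ j r) :=
    funext fun r => (slice_hasDerivAt (hR.differentiable (by norm_num)) ξ j r).deriv
  rw [h1]
  have h2 : HasDerivAt (fun r => pD R j (Function.update ξ j r))
      (pD (pD R j) j (Function.update ξ j (ξ j))) (ξ j) :=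
    slice_hasDerivAt ((pD_contDiff hR j).differentiable one_ne_zero) ξ j (ξ j)
  rw [h2.deriv, Function.update_eq_self]
  rfl

lemma lapR_eq {R : (Fin 2 → ℝ) → ℝ} (hR : ContDiff ℝ 2 R) (ξ : Fin 2 → ℝ) :
    lapR R ξ = qD R 0 ξ + qD R 1 ξ := by
  rw [lapR, Fin.sum_univ_two, slice2 hR ξ 0, slice2 hR ξ 1]

/-- If `R` is a twice continuously differentiable solution of `ΔR − R + R³ = 0` on ℝ²
and `t_c > 0`, then the explicit blowup solution is a classical solution of the
two-dimensional cubic NLS `i ∂_t ψ + Δψ + |ψ|²ψ = 0` for all `t < t_c`. -/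
theorem blowup_solution_solves_cubic_nls (R : (Fin 2 → ℝ) → ℝ)
    (hR : ContDiff ℝ 2 R)
    (hReq : ∀ ξ : Fin 2 → ℝ, lapR R ξ - R ξ + (R ξ) ^ 3 = 0)
    (tc : ℝ) (htc : 0 < tc) :
    ∀ t < tc, ∀ x : Fin 2 → ℝ,
      Complex.I * tDeriv (blowupSol tc R) t x + lapC (blowupSol tc R) t x
        + (‖blowupSol tc R t x‖ : ℂ) ^ 2 * blowupSol tc R t x = 0 := by
  intro t ht x
  have hRd : Differentiable ℝ R := hR.differentiable (by norm_num)
  have hlpos : (0:ℝ) < tc - t := sub_pos.mpr ht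
  have hl0' : tc - t ≠ 0 := ne_of_gt hlpos
  have htc0 : tc ≠ 0 := ne_of_gt htc
  simp only [tDeriv, lapC, blowupSol, Fin.sum_univ_two]
  set l := tc - t with hldef
  have hl0 : l ≠ 0 := hl0'
  set ξ : Fin 2 → ℝ := l⁻¹ • x with hxidef
  set E : ℂ := Complex.exp (Complex.I *
      ((t / (tc * l) - (x 0 ^ 2 + x 1 ^ 2) / (4 * l) : ℝ) : ℂ)) with hEdef
  -- time derivative
  have h1 : HasDerivAt (fun s : ℝ => tc - s) (-1 : ℝ) t := by
    simpa using (hasDerivAt_id t).const_sub tc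
  have hinv : HasDerivAt (fun s : ℝ => (tc - s)⁻¹) (l⁻¹ * l⁻¹) t := by
    have h2 := h1.inv hl0'
    refine h2.congr_deriv ?_
    rw [hldef]; field_simp
  have hcurve : HasDerivAt (fun s : ℝ => (tc - s)⁻¹ • x) ((l⁻¹ * l⁻¹) • x) t :=
    hinv.smul_const x
  have hRc : HasDerivAt (fun s : ℝ => R ((tc - s)⁻¹ • x))
      (l⁻¹ * l⁻¹ * (x 0 * pD R 0 ξ + x 1 * pD R 1 ξ)) t := by
    have h := (hRd ξ).hasFDerivAt.comp_hasDerivAt t hcurve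
    refine h.congr_deriv ?_
    rw [fderiv_apply_two]
    simp only [Pi.smul_apply, smul_eq_mul]
    ring
  have hA : HasDerivAt (fun s : ℝ => (tc - s)⁻¹ * R ((tc - s)⁻¹ • x))
      (l⁻¹ * l⁻¹ * R ξ + l⁻¹ * (l⁻¹ * l⁻¹ * (x 0 * pD R 0 ξ + x 1 * pD R 1 ξ))) t :=
    hinv.mul hRc
  have hθd : HasDerivAt (fun s : ℝ => s / (tc * (tc - s)) - (x 0 ^ 2 + x 1 ^ 2) / (4 * (tc - s)))
      (l⁻¹ * l⁻¹ - (x 0 ^ 2 + x 1 ^ 2) * (l⁻¹ * l⁻¹) / 4) t := by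
    have hden : HasDerivAt (fun s : ℝ => tc * (tc - s)) (tc * (-1)) t := h1.const_mul tc
    have hq := (hasDerivAt_id t).div hden (mul_ne_zero htc0 hl0')
    have hden4 : HasDerivAt (fun s : ℝ => 4 * (tc - s)) ((4:ℝ) * (-1)) t := h1.const_mul 4
    have hq2 := (hasDerivAt_const t (x 0 ^ 2 + x 1 ^ 2)).div hden4
      (mul_ne_zero (by norm_num) hl0')
    have h3 := hq.sub hq2
    refine h3.congr_deriv ?_
    rw [hldef]
    simp only [id_eq]
    field_simp
    ring
  have hexp := ((hθd.ofReal_comp).const_mul Complex.I).cexp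
  have hF : HasDerivAt
      (fun s : ℝ => (((tc - s)⁻¹ * R ((tc - s)⁻¹ • x) : ℝ) : ℂ) *
        Complex.exp (Complex.I *
          ((s / (tc * (tc - s)) - (x 0 ^ 2 + x 1 ^ 2) / (4 * (tc - s)) : ℝ) : ℂ)))
      ((((l⁻¹ * l⁻¹ * R ξ + l⁻¹ * (l⁻¹ * l⁻¹ * (x 0 * pD R 0 ξ + x 1 * pD R 1 ξ)) : ℝ)) : ℂ) * E
        + (((l⁻¹ * R ξ : ℝ)) : ℂ) *
          (E * (Complex.I * ((l⁻¹ * l⁻¹ - (x 0 ^ 2 + x 1 ^ 2) * (l⁻¹ * l⁻¹) / 4 : ℝ) : ℂ)))) t :=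
    (hA.ofReal_comp).mul hexp
  have htd : deriv
      (fun s : ℝ => (((tc - s)⁻¹ * R ((tc - s)⁻¹ • x) : ℝ) : ℂ) *
        Complex.exp (Complex.I *
          ((s / (tc * (tc - s)) - (x 0 ^ 2 + x 1 ^ 2) / (4 * (tc - s)) : ℝ) : ℂ))) t
      = E * (((l⁻¹ * l⁻¹ * R ξ
            + l⁻¹ * (l⁻¹ * l⁻¹ * (x 0 * pD R 0 ξ + x 1 * pD R 1 ξ)) : ℝ)) : ℂ)
          + E * (((l⁻¹ * R ξ * (l⁻¹ * l⁻¹ - (x 0 ^ 2 + x 1 ^ 2) * (l⁻¹ * l⁻¹) / 4) : ℝ) : ℂ))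
              * Complex.I := by
    rw [hF.deriv]
    push_cast
    ring
  -- spatial second derivatives
  have key : ∀ j : Fin 2,
      iteratedDeriv 2
        (fun s => ((l⁻¹ * R (l⁻¹ • Function.update x j s) : ℝ) : ℂ) *
          Complex.exp (Complex.I *
            ((t / (tc * l) -
              (Function.update x j s 0 ^ 2 + Function.update x j s 1 ^ 2) / (4 * l) : ℝ) : ℂ)))
        (x j)
      = E * (((l⁻¹ * (l⁻¹ * l⁻¹) * qD R j ξ
              - (x j) ^ 2 * (l⁻¹ * (l⁻¹ * l⁻¹)) * R ξ / 4 : ℝ)) : ℂ)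
        + E * (((-(x j) * (l⁻¹ * (l⁻¹ * l⁻¹)) * pD R j ξ - l⁻¹ * l⁻¹ * R ξ / 2 : ℝ)) : ℂ)
            * Complex.I := by
    intro j
    have hupd : ∀ s : ℝ, l⁻¹ • Function.update x j s = Function.update ξ j (l⁻¹ * s) := by
      intro s; funext k
      rw [hxidef]
      simp [Function.update_apply, Pi.smul_apply, smul_eq_mul, mul_ite]
    have hsum : ∀ s : ℝ, Function.update x j s 0 ^ 2 + Function.update x j s 1 ^ 2
        = x 0 ^ 2 + x 1 ^ 2 - (x j) ^ 2 + s ^ 2 := by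
      intro s; fin_cases j <;> simp [Function.update_apply] <;> ring
    have hfe : (fun s => ((l⁻¹ * R (l⁻¹ • Function.update x j s) : ℝ) : ℂ) *
          Complex.exp (Complex.I *
            ((t / (tc * l) -
              (Function.update x j s 0 ^ 2 + Function.update x j s 1 ^ 2) / (4 * l) : ℝ) : ℂ)))
        = (fun s => ((l⁻¹ * R (Function.update ξ j (l⁻¹ * s)) : ℝ) : ℂ) *
          Complex.exp (Complex.I *
            ((t / (tc * l) -
              (x 0 ^ 2 + x 1 ^ 2 - (x j) ^ 2 + s ^ 2) / (4 * l) : ℝ) : ℂ))) := by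
      funext s; rw [hupd s, hsum s]
    rw [hfe]
    -- first derivative
    have ha : ∀ s : ℝ, HasDerivAt (fun s : ℝ => l⁻¹ * R (Function.update ξ j (l⁻¹ * s)))
        (l⁻¹ * (pD R j (Function.update ξ j (l⁻¹ * s)) * l⁻¹)) s := by
      intro s
      have hlin : HasDerivAt (fun s : ℝ => l⁻¹ * s) l⁻¹ s := by
        simpa using (hasDerivAt_id s).const_mul l⁻¹
      exact ((slice_hasDerivAt hRd ξ j (l⁻¹ * s)).comp s hlin).const_mul l⁻¹
    have hth : ∀ s : ℝ, HasDerivAt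
        (fun s : ℝ => t / (tc * l) - (x 0 ^ 2 + x 1 ^ 2 - (x j) ^ 2 + s ^ 2) / (4 * l))
        (-(s * l⁻¹ / 2)) s := by
      intro s
      have hp : HasDerivAt (fun s : ℝ => x 0 ^ 2 + x 1 ^ 2 - (x j) ^ 2 + s ^ 2) (2 * s) s := by
        simpa using ((hasDerivAt_pow 2 s).const_add (x 0 ^ 2 + x 1 ^ 2 - (x j) ^ 2))
      have h2 := (hp.div_const (4 * l)).const_sub (t / (tc * l))
      refine h2.congr_deriv ?_
      field_simp
      ring
    have he : ∀ s : ℝ, HasDerivAt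
        (fun s : ℝ => Complex.exp (Complex.I *
          ((t / (tc * l) - (x 0 ^ 2 + x 1 ^ 2 - (x j) ^ 2 + s ^ 2) / (4 * l) : ℝ) : ℂ)))
        (Complex.exp (Complex.I *
          ((t / (tc * l) - (x 0 ^ 2 + x 1 ^ 2 - (x j) ^ 2 + s ^ 2) / (4 * l) : ℝ) : ℂ)) *
          (Complex.I * ((-(s * l⁻¹ / 2) : ℝ) : ℂ))) s :=
      fun s => (((hth s).ofReal_comp).const_mul Complex.I).cexp
    have hg1 : ∀ s : ℝ, HasDerivAt
        (fun s : ℝ => ((l⁻¹ * R (Function.update ξ j (l⁻¹ * s)) : ℝ) : ℂ) *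
          Complex.exp (Complex.I *
            ((t / (tc * l) - (x 0 ^ 2 + x 1 ^ 2 - (x j) ^ 2 + s ^ 2) / (4 * l) : ℝ) : ℂ)))
        (((l⁻¹ * (pD R j (Function.update ξ j (l⁻¹ * s)) * l⁻¹) : ℝ) : ℂ) *
          Complex.exp (Complex.I *
            ((t / (tc * l) - (x 0 ^ 2 + x 1 ^ 2 - (x j) ^ 2 + s ^ 2) / (4 * l) : ℝ) : ℂ))
          + ((l⁻¹ * R (Function.update ξ j (l⁻¹ * s)) : ℝ) : ℂ) *
            (Complex.exp (Complex.I *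
              ((t / (tc * l) - (x 0 ^ 2 + x 1 ^ 2 - (x j) ^ 2 + s ^ 2) / (4 * l) : ℝ) : ℂ)) *
              (Complex.I * ((-(s * l⁻¹ / 2) : ℝ) : ℂ)))) s :=
      fun s => ((ha s).ofReal_comp).mul (he s)
    have hderiv1 : deriv
        (fun s : ℝ => ((l⁻¹ * R (Function.update ξ j (l⁻¹ * s)) : ℝ) : ℂ) *
          Complex.exp (Complex.I *
            ((t / (tc * l) - (x 0 ^ 2 + x 1 ^ 2 - (x j) ^ 2 + s ^ 2) / (4 * l) : ℝ) : ℂ)))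
        = (fun s : ℝ =>
          ((l⁻¹ * (pD R j (Function.update ξ j (l⁻¹ * s)) * l⁻¹) : ℝ) : ℂ) *
          Complex.exp (Complex.I *
            ((t / (tc * l) - (x 0 ^ 2 + x 1 ^ 2 - (x j) ^ 2 + s ^ 2) / (4 * l) : ℝ) : ℂ))
          + ((l⁻¹ * R (Function.update ξ j (l⁻¹ * s)) : ℝ) : ℂ) *
            (Complex.exp (Complex.I *
              ((t / (tc * l) - (x 0 ^ 2 + x 1 ^ 2 - (x j) ^ 2 + s ^ 2) / (4 * l) : ℝ) : ℂ)) *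
              (Complex.I * ((-(s * l⁻¹ / 2) : ℝ) : ℂ)))) :=
      funext fun s => (hg1 s).deriv
    -- second derivative at x j
    have hxj : l⁻¹ * x j = ξ j := by rw [hxidef]; simp
    have hup2 : Function.update ξ j (l⁻¹ * x j) = ξ := by
      rw [hxj, Function.update_eq_self]
    have hlin : HasDerivAt (fun s : ℝ => l⁻¹ * s) l⁻¹ (x j) := by
      simpa using (hasDerivAt_id (x j)).const_mul l⁻¹
    have hPd : HasDerivAt (fun s : ℝ => pD R j (Function.update ξ j (l⁻¹ * s)))
        (qD R j ξ * l⁻¹) (x j) := by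
      have h := (slice_hasDerivAt ((pD_contDiff hR j).differentiable one_ne_zero) ξ j
        (l⁻¹ * x j)).comp (x j) hlin
      rw [hup2] at h
      exact h
    have hAd : HasDerivAt (fun s : ℝ => l⁻¹ * R (Function.update ξ j (l⁻¹ * s)))
        (l⁻¹ * (pD R j ξ * l⁻¹)) (x j) := by
      have h := ha (x j)
      rw [hup2] at h
      exact h
    have hed := he (x j)
    have hm : HasDerivAt (fun s : ℝ => Complex.I * ((-(s * l⁻¹ / 2) : ℝ) : ℂ))
        (Complex.I * ((-(l⁻¹ / 2) : ℝ) : ℂ)) (x j) := by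
      have h1' : HasDerivAt (fun s : ℝ => -(s * l⁻¹ / 2)) (-(l⁻¹ / 2)) (x j) := by
        exact (((hasDerivAt_id' (x j)).mul_const l⁻¹).div_const 2).neg.congr_deriv (by ring)
      exact (h1'.ofReal_comp).const_mul Complex.I
    have hPdm : HasDerivAt (fun s : ℝ => l⁻¹ * (pD R j (Function.update ξ j (l⁻¹ * s)) * l⁻¹))
        (l⁻¹ * (qD R j ξ * l⁻¹ * l⁻¹)) (x j) := by
      exact (hPd.mul_const l⁻¹).const_mul l⁻¹
    have hterm1 := (hPdm.ofReal_comp).mul hed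
    have hterm2 := (hAd.ofReal_comp).mul (hed.mul hm)
    have hg2 := hterm1.add hterm2
    rw [iteratedDeriv_succ, iteratedDeriv_one, hderiv1]
    erw [hg2.deriv]
    simp only [Pi.mul_apply]
    rw [hup2]
    have hph : (t / (tc * l) - (x 0 ^ 2 + x 1 ^ 2 - (x j) ^ 2 + (x j) ^ 2) / (4 * l) : ℝ)
        = t / (tc * l) - (x 0 ^ 2 + x 1 ^ 2) / (4 * l) := by ring
    rw [hph, ← hEdef]
    apply Complex.ext <;>
      simp only [Complex.add_re, Complex.add_im, Complex.mul_re, Complex.mul_im,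
        Complex.ofReal_re, Complex.ofReal_im, Complex.I_re, Complex.I_im,
        Complex.neg_re, Complex.neg_im, Complex.sub_re, Complex.sub_im] <;>
      ring
  -- norm term
  have hE1 : ‖E‖ = 1 := by
    have h0 : (Complex.I * ((t / (tc * l) - (x 0 ^ 2 + x 1 ^ 2) / (4 * l) : ℝ) : ℂ)).re = 0 := by
      simp only [Complex.mul_re, Complex.I_re, Complex.I_im, Complex.ofReal_re,
        Complex.ofReal_im]
      ring
    rw [hEdef, Complex.norm_exp, h0, Real.exp_zero]
  have hnorm : ((‖((l⁻¹ * R ξ : ℝ) : ℂ) * E‖ : ℝ) : ℂ) ^ 2 * (((l⁻¹ * R ξ : ℝ) : ℂ) * E)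
      = E * (((l⁻¹ * R ξ) * (l⁻¹ * R ξ) * (l⁻¹ * R ξ) : ℝ) : ℂ) := by
    rw [norm_mul, hE1, mul_one, Complex.norm_real, Real.norm_eq_abs,
      ← Complex.ofReal_pow, sq_abs]
    push_cast
    ring
  rw [htd, key 0, key 1, hnorm]
  have hlap : qD R 0 ξ + qD R 1 ξ - R ξ + R ξ ^ 3 = 0 := by
    have h := hReq ξ
    rw [lapR_eq hR ξ] at h
    linarith
  apply Complex.ext
  · simp only [Complex.add_re, Complex.add_im, Complex.mul_re, Complex.mul_im,
      Complex.ofReal_re, Complex.ofReal_im, Complex.I_re, Complex.I_im,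
      Complex.zero_re, Complex.zero_im]
    linear_combination (E.re * (l⁻¹ * (l⁻¹ * l⁻¹))) * hlap
  · simp only [Complex.add_re, Complex.add_im, Complex.mul_re, Complex.mul_im,
      Complex.ofReal_re, Complex.ofReal_im, Complex.I_re, Complex.I_im,
      Complex.zero_re, Complex.zero_im]
    linear_combination (E.im * (l⁻¹ * (l⁻¹ * l⁻¹))) * hlap
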